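/- Let h be a p-to-e calibrator and P an (ε,δ)-approximate p-variable for P. Then E := h(P) is an (ε,δ)-approximate e-variable: for all t ≥ 0 and all P ∈ P, E^P[min(h(P), t)] ≤ 1 + ε_P + δ_P·t. -/

import Mathlib

open MeasureTheory
open scoped ENNReal

/-- Layer cake formula for `ℝ≥0∞`-valued functions, via Tonelli. -/
lemma layercake_ennreal {α : Type*} [MeasurableSpace α] (μ : Measure α) [SigmaFinite μ]
    {f : α → ℝ≥0∞} (hf : Measurable f) :
    ∫⁻ x, f x ∂μ = ∫⁻ u in Set.Ioi (0:ℝ), μ {x | ENNReal.ofReal u < f x} := by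
  have hs : MeasurableSet {p : ℝ × α | ENNReal.ofReal p.1 < f p.2} :=
    measurableSet_lt (ENNReal.measurable_ofReal.comp measurable_fst) (hf.comp measurable_snd)
  have key : ∀ u : ℝ, μ {x | ENNReal.ofReal u < f x}
      = ∫⁻ x, Set.indicator {p : ℝ × α | ENNReal.ofReal p.1 < f p.2} 1 (u, x) ∂μ := by
    intro u
    have e1 : (fun x => Set.indicator {p : ℝ × α | ENNReal.ofReal p.1 < f p.2} 1 (u, x))
        = Set.indicator {x | ENNReal.ofReal u < f x} (1 : α → ℝ≥0∞) := by
      ext x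
      by_cases hx : ENNReal.ofReal u < f x <;> simp [Set.indicator_apply, hx]
    rw [e1, lintegral_indicator_one (measurableSet_lt measurable_const hf)]
  have swap :
      ∫⁻ u in Set.Ioi (0:ℝ), ∫⁻ x,
          Set.indicator {p : ℝ × α | ENNReal.ofReal p.1 < f p.2} 1 (u, x) ∂μ
        = ∫⁻ x, (∫⁻ u in Set.Ioi (0:ℝ),
          Set.indicator {p : ℝ × α | ENNReal.ofReal p.1 < f p.2} 1 (u, x)) ∂μ :=
    lintegral_lintegral_swap
      (f := fun u x => Set.indicator {p : ℝ × α | ENNReal.ofReal p.1 < f p.2} 1 (u, x))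
      ((measurable_one.indicator hs).aemeasurable)
  have final : ∀ x, (∫⁻ u in Set.Ioi (0:ℝ),
      Set.indicator {p : ℝ × α | ENNReal.ofReal p.1 < f p.2} 1 (u, x)) = f x := by
    intro x
    have e2 : ∀ u : ℝ, Set.indicator {p : ℝ × α | ENNReal.ofReal p.1 < f p.2} 1 (u, x)
        = Set.indicator {u : ℝ | ENNReal.ofReal u < f x} (1 : ℝ → ℝ≥0∞) u := by
      intro u
      by_cases hu : ENNReal.ofReal u < f x <;> simp [Set.indicator_apply, hu]
    have hmu : MeasurableSet {u : ℝ | ENNReal.ofReal u < f x} :=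
      measurableSet_lt ENNReal.measurable_ofReal measurable_const
    simp_rw [e2]
    rw [lintegral_indicator_one hmu, Measure.restrict_apply hmu]
    rcases eq_or_ne (f x) ∞ with hfx | hfx
    · have e3 : {u : ℝ | ENNReal.ofReal u < f x} ∩ Set.Ioi 0 = Set.Ioi 0 := by
        ext u; simp [hfx]
      rw [e3, Real.volume_Ioi, hfx]
    · have e3 : {u : ℝ | ENNReal.ofReal u < f x} ∩ Set.Ioi 0
          = Set.Ioo 0 (f x).toReal := by
        ext u
        simp only [Set.mem_inter_iff, Set.mem_setOf_eq, Set.mem_Ioi, Set.mem_Ioo]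
        constructor
        · rintro ⟨h1, h2⟩
          exact ⟨h2, (ENNReal.ofReal_lt_iff_lt_toReal h2.le hfx).mp h1⟩
        · rintro ⟨h1, h2⟩
          exact ⟨(ENNReal.ofReal_lt_iff_lt_toReal h1.le hfx).mpr h2, h1⟩
      rw [e3, Real.volume_Ioo, sub_zero, ENNReal.ofReal_toReal hfx]
  rw [show (∫⁻ u in Set.Ioi (0:ℝ), μ {x | ENNReal.ofReal u < f x})
      = ∫⁻ u in Set.Ioi (0:ℝ), ∫⁻ x,
        Set.indicator {p : ℝ × α | ENNReal.ofReal p.1 < f p.2} 1 (u, x) ∂μ from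
    lintegral_congr fun u => key u, swap]
  exact (lintegral_congr final).symm

/-- Calibrating an `(ε,δ)`-approximate p-variable with a p-to-e calibrator `h` yields an
`(ε,δ)`-approximate e-variable: `E^P[min(h(X), t)] ≤ 1 + ε_P + δ_P·t` for all `t ≥ 0`. -/
theorem calibrate_approx_p_to_approx_e {Ω : Type*} [MeasurableSpace Ω]
    (Unv : Set (Measure Ω)) (hprob : ∀ P ∈ Unv, IsProbabilityMeasure P)
    (ε δ : Measure Ω → ℝ)
    (hε : ∀ P ∈ Unv, 0 ≤ ε P) (hδ : ∀ P ∈ Unv, 0 ≤ δ P ∧ δ P ≤ 1)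
    (h : ℝ → ℝ≥0∞) (hanti : Antitone h)
    (hint : ∫⁻ x in Set.Ioo (0:ℝ) 1, h x ≤ 1)
    (hzero : ∀ x : ℝ, 1 < x → h x = 0)
    (X : Ω → ℝ) (hX : Measurable X) (hXnn : ∀ ω, 0 ≤ X ω)
    (happrox : ∀ P ∈ Unv, ∀ s : ℝ, 0 < s → s < 1 →
      P {ω | X ω ≤ s} ≤ ENNReal.ofReal ((1 + ε P) * s + δ P)) :
    ∀ P ∈ Unv, ∀ t : ℝ, 0 ≤ t →
      ∫⁻ ω, min (h (X ω)) (ENNReal.ofReal t) ∂P ≤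
        1 + ENNReal.ofReal (ε P) + ENNReal.ofReal (δ P) * ENNReal.ofReal t := by
  intro P hP t ht
  haveI := hprob P hP
  have hεP := hε P hP
  have hδP := (hδ P hP).1
  have hh : Measurable h := hanti.measurable
  have hg : Measurable fun ω => min (h (X ω)) (ENNReal.ofReal t) :=
    (hh.comp hX).min measurable_const
  -- CDF bound at every `s ∈ [0,1]`
  have claim2 : ∀ s : ℝ, 0 ≤ s → s ≤ 1 →
      P {ω | X ω ≤ s} ≤ ENNReal.ofReal ((1 + ε P) * s + δ P) := by
    intro s hs0 hs1
    rcases lt_or_eq_of_le hs1 with hs1' | rfl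
    · have key : ∀ s' ∈ Set.Ioi s, s' < 1 →
          P {ω | X ω ≤ s} ≤ ENNReal.ofReal ((1 + ε P) * s' + δ P) := by
        intro s' hs' hs'1
        rw [Set.mem_Ioi] at hs'
        refine le_trans (measure_mono fun ω hω =>
          show X ω ≤ s' from le_trans hω (le_of_lt hs')) ?_
        exact happrox P hP s' (lt_of_le_of_lt hs0 hs') hs'1
      have tends : Filter.Tendsto (fun s' : ℝ => ENNReal.ofReal ((1 + ε P) * s' + δ P))
          (nhdsWithin s (Set.Ioi s)) (nhds (ENNReal.ofReal ((1 + ε P) * s + δ P))) := by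
        apply Filter.Tendsto.mono_left _ nhdsWithin_le_nhds
        exact (ENNReal.continuous_ofReal.tendsto _).comp
          (Continuous.tendsto (by continuity) s)
      refine ge_of_tendsto tends ?_
      have h1 : ∀ᶠ s' in nhdsWithin s (Set.Ioi s), s' < 1 :=
        Filter.Eventually.filter_mono nhdsWithin_le_nhds (eventually_lt_nhds hs1')
      filter_upwards [h1, self_mem_nhdsWithin] with s' hs'1 hs's
      exact key s' hs's hs'1
    · refine le_trans prob_le_one ?_
      rw [mul_one]
      calc (1:ℝ≥0∞) = ENNReal.ofReal 1 := ENNReal.ofReal_one.symm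
        _ ≤ _ := ENNReal.ofReal_le_ofReal (by linarith)
  -- pointwise tail bound
  have claim : ∀ u ∈ Set.Ioi (0:ℝ),
      P {ω | ENNReal.ofReal u < min (h (X ω)) (ENNReal.ofReal t)}
        ≤ ENNReal.ofReal (1 + ε P) * volume ({x | ENNReal.ofReal u < h x} ∩ Set.Ioo 0 1)
          + Set.indicator (Set.Ioo 0 t) (fun _ => ENNReal.ofReal (δ P)) u := by
    intro u hu
    rw [Set.mem_Ioi] at hu
    by_cases hut : t ≤ u
    · have he : {ω | ENNReal.ofReal u < min (h (X ω)) (ENNReal.ofReal t)} = ∅ := by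
        ext ω
        simp only [Set.mem_setOf_eq, Set.mem_empty_iff_false, iff_false, not_lt]
        exact le_trans (min_le_right _ _) (ENNReal.ofReal_le_ofReal hut)
      rw [he]
      simp
    · push_neg at hut
      rw [Set.indicator_of_mem (Set.mem_Ioo.mpr ⟨hu, hut⟩)]
      have step1 : P {ω | ENNReal.ofReal u < min (h (X ω)) (ENNReal.ofReal t)}
          ≤ P {ω | ENNReal.ofReal u < h (X ω)} :=
        measure_mono fun ω hω => show ENNReal.ofReal u < h (X ω) from
          lt_of_lt_of_le hω (min_le_left _ _)
      by_cases h1 : ENNReal.ofReal u < h 1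
      · have hsub : Set.Ioo (0:ℝ) 1 ⊆ {x | ENNReal.ofReal u < h x} :=
          fun x hx => lt_of_lt_of_le h1 (hanti (le_of_lt hx.2))
        have hW1 : (1:ℝ≥0∞) ≤ volume ({x | ENNReal.ofReal u < h x} ∩ Set.Ioo 0 1) := by
          have := measure_mono (μ := volume)
            (Set.subset_inter hsub (Set.Subset.refl (Set.Ioo (0:ℝ) 1)))
          rwa [Real.volume_Ioo, sub_zero, ENNReal.ofReal_one] at this
        have hone : (1:ℝ≥0∞) ≤ ENNReal.ofReal (1 + ε P) := by
          rw [← ENNReal.ofReal_one]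
          exact ENNReal.ofReal_le_ofReal (by linarith)
        calc P {ω | ENNReal.ofReal u < min (h (X ω)) (ENNReal.ofReal t)} ≤ 1 := prob_le_one
          _ = 1 * 1 := (one_mul 1).symm
          _ ≤ ENNReal.ofReal (1 + ε P)
                * volume ({x | ENNReal.ofReal u < h x} ∩ Set.Ioo 0 1) :=
            mul_le_mul' hone hW1
          _ ≤ _ := le_self_add
      · push_neg at h1
        by_cases h0 : ENNReal.ofReal u < h 0
        · set A := {x : ℝ | 0 ≤ x ∧ ENNReal.ofReal u < h x} with hA
          have hA0 : (0:ℝ) ∈ A := ⟨le_refl 0, h0⟩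
          have hAbd : ∀ x ∈ A, x ≤ 1 := by
            intro x hx
            by_contra hx1
            push_neg at hx1
            have hx2 := hx.2
            rw [hzero x hx1] at hx2
            exact (not_lt.mpr zero_le) hx2
          have hbdd : BddAbove A := ⟨1, fun x hx => hAbd x hx⟩
          set s := sSup A with hsdef
          have hs0 : 0 ≤ s := le_csSup hbdd hA0
          have hs1 : s ≤ 1 := csSup_le ⟨0, hA0⟩ hAbd
          have hsub2 : {ω | ENNReal.ofReal u < h (X ω)} ⊆ {ω | X ω ≤ s} :=
            fun ω hω => le_csSup hbdd ⟨hXnn ω, hω⟩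
          have hWge : ENNReal.ofReal s
              ≤ volume ({x | ENNReal.ofReal u < h x} ∩ Set.Ioo 0 1) := by
            have hsub3 : Set.Ioo 0 s ⊆ {x | ENNReal.ofReal u < h x} ∩ Set.Ioo 0 1 := by
              intro x hx
              obtain ⟨y, hyA, hxy⟩ := exists_lt_of_lt_csSup ⟨0, hA0⟩ hx.2
              exact ⟨lt_of_lt_of_le hyA.2 (hanti (le_of_lt hxy)),
                hx.1, lt_of_lt_of_le hx.2 hs1⟩
            calc ENNReal.ofReal s = volume (Set.Ioo 0 s) := by
                  rw [Real.volume_Ioo, sub_zero]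
              _ ≤ _ := measure_mono hsub3
          calc P {ω | ENNReal.ofReal u < min (h (X ω)) (ENNReal.ofReal t)}
              ≤ P {ω | X ω ≤ s} := le_trans step1 (measure_mono hsub2)
            _ ≤ ENNReal.ofReal ((1 + ε P) * s + δ P) := claim2 s hs0 hs1
            _ = ENNReal.ofReal ((1 + ε P) * s) + ENNReal.ofReal (δ P) :=
                ENNReal.ofReal_add (mul_nonneg (by linarith) hs0) hδP
            _ = ENNReal.ofReal (1 + ε P) * ENNReal.ofReal s + ENNReal.ofReal (δ P) := by
                rw [ENNReal.ofReal_mul (by linarith)]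
            _ ≤ _ := add_le_add_left (mul_le_mul_right hWge _) _
        · push_neg at h0
          have he : {ω | ENNReal.ofReal u < h (X ω)} = ∅ := by
            ext ω
            simp only [Set.mem_setOf_eq, Set.mem_empty_iff_false, iff_false, not_lt]
            exact le_trans (hanti (hXnn ω)) h0
          refine le_trans (le_trans step1 ?_) zero_le
          rw [he]
          simp
  -- assemble
  have hWint : ∫⁻ u in Set.Ioi (0:ℝ),
      volume ({x | ENNReal.ofReal u < h x} ∩ Set.Ioo 0 1) ≤ 1 := by
    have e : ∫⁻ x in Set.Ioo (0:ℝ) 1, h x = ∫⁻ u in Set.Ioi (0:ℝ),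
        volume ({x | ENNReal.ofReal u < h x} ∩ Set.Ioo 0 1) := by
      rw [layercake_ennreal (volume.restrict (Set.Ioo (0:ℝ) 1)) hh]
      refine lintegral_congr fun u => ?_
      rw [Measure.restrict_apply (measurableSet_lt measurable_const hh)]
    rw [← e]
    exact hint
  have hIind : ∫⁻ u in Set.Ioi (0:ℝ),
      Set.indicator (Set.Ioo 0 t) (fun _ : ℝ => ENNReal.ofReal (δ P)) u
        = ENNReal.ofReal (δ P) * ENNReal.ofReal t := by
    rw [lintegral_indicator measurableSet_Ioo, setLIntegral_const,
      Measure.restrict_apply measurableSet_Ioo]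
    have e : Set.Ioo (0:ℝ) t ∩ Set.Ioi 0 = Set.Ioo 0 t := by
      rw [Set.inter_eq_left]
      exact fun x hx => hx.1
    rw [e, Real.volume_Ioo, sub_zero]
  calc ∫⁻ ω, min (h (X ω)) (ENNReal.ofReal t) ∂P
      = ∫⁻ u in Set.Ioi (0:ℝ),
          P {ω | ENNReal.ofReal u < min (h (X ω)) (ENNReal.ofReal t)} :=
        layercake_ennreal P hg
    _ ≤ ∫⁻ u in Set.Ioi (0:ℝ),
          (ENNReal.ofReal (1 + ε P) * volume ({x | ENNReal.ofReal u < h x} ∩ Set.Ioo 0 1)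
            + Set.indicator (Set.Ioo 0 t) (fun _ => ENNReal.ofReal (δ P)) u) :=
        lintegral_mono_ae ((ae_restrict_iff' measurableSet_Ioi).2 (ae_of_all _ claim))
    _ = ENNReal.ofReal (1 + ε P)
          * (∫⁻ u in Set.Ioi (0:ℝ), volume ({x | ENNReal.ofReal u < h x} ∩ Set.Ioo 0 1))
          + ∫⁻ u in Set.Ioi (0:ℝ),
              Set.indicator (Set.Ioo 0 t) (fun _ : ℝ => ENNReal.ofReal (δ P)) u := by
        rw [lintegral_add_right _ (measurable_const.indicator measurableSet_Ioo),
          lintegral_const_mul' _ _ ENNReal.ofReal_ne_top]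
    _ ≤ ENNReal.ofReal (1 + ε P) * 1 + ENNReal.ofReal (δ P) * ENNReal.ofReal t := by
        rw [hIind]
        exact add_le_add_left (mul_le_mul_right hWint _) _
    _ = 1 + ENNReal.ofReal (ε P) + ENNReal.ofReal (δ P) * ENNReal.ofReal t := by
        rw [mul_one, ENNReal.ofReal_add zero_le_one hεP, ENNReal.ofReal_one]
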